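/- For all real numbers α, β ≥ 0 and p ∈ (1,2], one has (p-1)(α-β)² ≤ γ_p(α,β) + γ_p(β,α) ≤ p(α-β)², where γ_p(α,β) := pα(α-β) - α^(2-p)(α^p - β^p). -/
import Mathlib


/-- `γ_p(α,β) = pα(α-β) - α^(2-p)(α^p - β^p)`, with real powers (`0^t = 0` for `t > 0`). -/
noncomputable def gammaP (p α β : ℝ) : ℝ :=
  p * α * (α - β) - α ^ (2 - p) * (α ^ p - β ^ p)

theorem symmetrized_gammaP_equiv_square (p α β : ℝ) (hα : 0 ≤ α) (hβ : 0 ≤ β)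
    (hp1 : 1 < p) (hp2 : p ≤ 2) :
    (p - 1) * (α - β) ^ 2 ≤ gammaP p α β + gammaP p β α ∧
      gammaP p α β + gammaP p β α ≤ p * (α - β) ^ 2 := by
  have key : ∀ a : ℝ, 0 ≤ a → a ^ (2 - p) * a ^ p = a ^ 2 := by
    intro a ha
    rw [← Real.rpow_add' ha (by norm_num : (2 - p) + p ≠ 0)]
    rw [show (2 - p) + p = 2 by ring, Real.rpow_two]
  have pw : ∀ a : ℝ, 0 ≤ a → ∀ t : ℝ, ((a ^ 2 : ℝ)) ^ t = a ^ (2 * t) := by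
    intro a ha t
    rw [← Real.rpow_two, ← Real.rpow_mul ha]
  have hsum : gammaP p α β + gammaP p β α =
      p * (α - β) ^ 2 - (α ^ 2 + β ^ 2 - α ^ (2 - p) * β ^ p - α ^ p * β ^ (2 - p)) := by
    have h1 := key α hα
    have h2 := key β hβ
    unfold gammaP
    linear_combination (-1 : ℝ) * h1 - h2
  -- upper bound: α^(2-p)*β^p + α^p*β^(2-p) ≤ α^2 + β^2
  have g1 : α ^ (2 - p) * β ^ p ≤ (2 - p) / 2 * α ^ 2 + p / 2 * β ^ 2 := by
    have := Real.geom_mean_le_arith_mean2_weighted (w₁ := (2 - p) / 2) (w₂ := p / 2)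
      (p₁ := α ^ 2) (p₂ := β ^ 2) (by linarith) (by linarith) (sq_nonneg α) (sq_nonneg β)
      (by ring)
    rwa [pw α hα, pw β hβ, show 2 * ((2 - p) / 2) = 2 - p by ring,
      show 2 * (p / 2) = p by ring] at this
  have g2 : α ^ p * β ^ (2 - p) ≤ p / 2 * α ^ 2 + (2 - p) / 2 * β ^ 2 := by
    have := Real.geom_mean_le_arith_mean2_weighted (w₁ := p / 2) (w₂ := (2 - p) / 2)
      (p₁ := α ^ 2) (p₂ := β ^ 2) (by linarith) (by linarith) (sq_nonneg α) (sq_nonneg β)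
      (by ring)
    rwa [pw α hα, pw β hβ, show 2 * ((2 - p) / 2) = 2 - p by ring,
      show 2 * (p / 2) = p by ring] at this
  -- lower bound: 2αβ ≤ α^(2-p)*β^p + α^p*β^(2-p)
  set x := α ^ (2 - p) * β ^ p with hxdef
  set y := α ^ p * β ^ (2 - p) with hydef
  have hx : 0 ≤ x := mul_nonneg (Real.rpow_nonneg hα _) (Real.rpow_nonneg hβ _)
  have hy : 0 ≤ y := mul_nonneg (Real.rpow_nonneg hα _) (Real.rpow_nonneg hβ _)
  have hxy : x * y = (α * β) ^ 2 := by
    have h1 := key α hα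
    have h2 := key β hβ
    rw [hxdef, hydef]
    calc α ^ (2 - p) * β ^ p * (α ^ p * β ^ (2 - p))
        = (α ^ (2 - p) * α ^ p) * (β ^ (2 - p) * β ^ p) := by ring
      _ = α ^ 2 * β ^ 2 := by rw [h1, h2]
      _ = (α * β) ^ 2 := by ring
  have hs : Real.sqrt x * Real.sqrt y = α * β := by
    rw [← Real.sqrt_mul hx, hxy, Real.sqrt_sq (mul_nonneg hα hβ)]
  have hlow : 2 * (α * β) ≤ x + y := by
    nlinarith [Real.sq_sqrt hx, Real.sq_sqrt hy, sq_nonneg (Real.sqrt x - Real.sqrt y)]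
  constructor
  · rw [hsum]; nlinarith
  · rw [hsum]; nlinarith
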